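/- For any two computable well-orderings A and B of ℕ with order types β < α respectively (both computable ordinals), E_min(A) is not computably reducible to E_min(B). -/

import Mathlib

/-- The `e`-th computably enumerable set of natural numbers: the domain of the
`e`-th partial computable function. -/
def Wce (e : ℕ) : Set ℕ :=
  {x | ((Denumerable.ofNat Nat.Partrec.Code e).eval x).Dom}


/-- A computable well-ordering of ℕ: a computable (Bool-valued) binary relation
whose associated strict relation is a well-order on ℕ. -/
structure CompWO where
  r : ℕ → ℕ → Bool
  comp : Computable₂ r
  wo : IsWellOrder ℕ (fun a b => r a b = true)

/-- `m` is the `A`-least element of `S`. -/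
def IsMinOf (A : CompWO) (S : Set ℕ) (m : ℕ) : Prop :=
  m ∈ S ∧ ∀ x ∈ S, A.r x m = false

/-- The equivalence relation `E_min(A)` on indices of c.e. sets: `W_e` and `W_i`
have the same `A`-least element, or are both empty. -/
def Emin (A : CompWO) (e i : ℕ) : Prop :=
  (Wce e = ∅ ∧ Wce i = ∅) ∨ ∃ m, IsMinOf A (Wce e) m ∧ IsMinOf A (Wce i) m

/-- Computable reducibility of binary relations on ℕ. -/
def CompReducible (E F : ℕ → ℕ → Prop) : Prop :=
  ∃ h : ℕ → ℕ, Computable h ∧ ∀ x y, E x y ↔ F (h x) (h y)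

/-- The order type of a computable well-ordering. -/
noncomputable def CompWO.otype (A : CompWO) : Ordinal :=
  @Ordinal.type ℕ (fun a b => A.r a b = true) A.wo

/-- The `A`-rank of an element: the order type of its set of predecessors. -/
noncomputable def CompWO.rank (A : CompWO) (a : ℕ) : Ordinal :=
  @Ordinal.typein ℕ (fun a b => A.r a b = true) A.wo a

open Nat.Partrec (Code)
open Nat.Partrec.Code

lemma wce_encode (c : Code) : Wce (Encodable.encode c) = {x | (c.eval x).Dom} := by
  simp [Wce, Denumerable.ofNat_encode]

lemma min_unique (A : CompWO) {S : Set ℕ} {m m' : ℕ}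
    (h1 : IsMinOf A S m) (h2 : IsMinOf A S m') : m = m' := by
  haveI := A.wo
  rcases trichotomous_of (fun a b => A.r a b = true) m m' with hh|hh|hh
  · rw [h2.2 m h1.1] at hh; cases hh
  · exact hh
  · rw [h1.2 m' h2.1] at hh; cases hh

lemma rr_self (A : CompWO) (n : ℕ) : A.r n n = false := by
  haveI := A.wo
  exact Bool.eq_false_iff.mpr (irrefl_of (fun a b => A.r a b = true) n)

lemma seg_min (A : CompWO) (n : ℕ) : IsMinOf A {x | A.r x n = false} n :=
  ⟨rr_self A n, fun _ hx => hx⟩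

lemma exists_bmin (B : CompWO) {S : Set ℕ} (hS : S.Nonempty) :
    ∃ m, IsMinOf B S m := by
  haveI := B.wo
  have wf : WellFounded (fun a b => B.r a b = true) := IsWellFounded.wf
  refine ⟨wf.min S hS, wf.min_mem S hS, fun x hx => ?_⟩
  exact Bool.eq_false_iff.mpr (wf.not_lt_min S hx)

lemma exists_seg_code (A : CompWO) (n : ℕ) :
    ∃ c : Code, ∀ x, (c.eval x).Dom ↔ A.r x n = false := by
  have hf : Partrec fun x : ℕ => bif A.r x n then Part.none else Part.some 0 :=
    Partrec.cond (A.comp.comp .id (.const n)) Partrec.none (Partrec.const' (Part.some 0))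
  obtain ⟨c, hc⟩ := exists_code.1 hf
  refine ⟨c, fun x => ?_⟩
  rw [hc]
  cases hx : A.r x n <;> simp [hx]

def neTest (k : ℕ) : Part ℕ :=
  Nat.rfindOpt fun t =>
    (evaln t.unpair.1 (Denumerable.ofNat Code k) t.unpair.2).map fun _ => 0

lemma neTest_dom (k : ℕ) : (neTest k).Dom ↔ (Wce k).Nonempty := by
  rw [neTest, Nat.rfindOpt_dom]
  constructor
  · rintro ⟨t, a, ha⟩
    simp only [Option.mem_def, Option.map_eq_some_iff] at ha
    obtain ⟨z, hz, -⟩ := ha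
    exact ⟨t.unpair.2, (evaln_sound hz).1⟩
  · rintro ⟨x, hx⟩
    obtain ⟨y, hy⟩ := Part.dom_iff_mem.mp hx
    obtain ⟨kk, hkk⟩ := evaln_complete.mp hy
    refine ⟨Nat.pair kk x, 0, ?_⟩
    simp only [Nat.unpair_pair, Option.mem_def, Option.map_eq_some_iff]
    exact ⟨y, hkk, trivial⟩

lemma neTest_partrec : Partrec neTest := by
  apply Partrec.rfindOpt
  have h1 : Primrec fun p : ℕ × ℕ =>
      evaln p.2.unpair.1 (Denumerable.ofNat Code p.1) p.2.unpair.2 := by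
    have := primrec_evaln
    exact this.comp (Primrec.pair
      (Primrec.pair (Primrec.fst.comp (Primrec.unpair.comp .snd))
        ((Primrec.ofNat Code).comp .fst))
      (Primrec.snd.comp (Primrec.unpair.comp .snd)))
  exact Primrec.to_comp (Primrec.option_map h1 (Primrec.const 0).to₂)

section Steps
variable {A B : CompWO} {h : ℕ → ℕ}

lemma stepA (hcomp : Computable h)
    (hred : ∀ x y, Emin A x y ↔ Emin B (h x) (h y))
    (n en : ℕ) (hen : Wce en = {x | A.r x n = false}) :
    (Wce (h en)).Nonempty := by
  by_contra hne
  rw [Set.not_nonempty_iff_eq_empty] at hne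
  set F : Code → ℕ →. ℕ :=
    fun c x => bif A.r x n then Part.none else neTest (h (Encodable.encode c)) with hF
  have hFp : Partrec₂ F :=
    Partrec.cond (A.comp.comp Computable.snd (Computable.const n)) Partrec.none
      (neTest_partrec.comp (hcomp.comp (Computable.encode.comp Computable.fst)))
  obtain ⟨c, hc⟩ := fixed_point₂ hFp
  have hW : Wce (Encodable.encode c) = {x | (F c x).Dom} := by
    rw [wce_encode, hc]
  rcases Set.eq_empty_or_nonempty (Wce (h (Encodable.encode c))) with hcase | hcase
  · -- image empty, so W_c empty, so Emin B holds but Emin A fails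
    have hWc : Wce (Encodable.encode c) = ∅ := by
      rw [hW]
      ext x
      simp only [Set.mem_setOf_eq, Set.mem_empty_iff_false, iff_false, hF]
      cases hx : A.r x n <;> simp [hx, neTest_dom, hcase]
    have hB : Emin B (h (Encodable.encode c)) (h en) := Or.inl ⟨hcase, hne⟩
    have hA := (hred _ _).mpr hB
    rcases hA with ⟨-, hA⟩ | ⟨k, hk, -⟩
    · rw [hen] at hA
      exact absurd hA (by intro hh; have := (Set.eq_empty_iff_forall_notMem.mp hh) n; simp [rr_self A n] at this)
    · rw [hWc] at hk
      exact hk.1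
  · -- image nonempty, so W_c = segment, so Emin A holds but Emin B fails
    have hWc : Wce (Encodable.encode c) = {x | A.r x n = false} := by
      rw [hW]
      ext x
      simp only [Set.mem_setOf_eq, hF]
      cases hx : A.r x n <;> simp [hx, neTest_dom, hcase]
    have hA : Emin A (Encodable.encode c) en :=
      Or.inr ⟨n, by rw [hWc]; exact seg_min A n, by rw [hen]; exact seg_min A n⟩
    rcases (hred _ _).mp hA with ⟨hh, -⟩ | ⟨k, -, hk⟩
    · rw [hh] at hcase; exact Set.not_nonempty_empty hcase
    · rw [hne] at hk
      exact hk.1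

lemma stepB (hcomp : Computable h)
    (hred : ∀ x y, Emin A x y ↔ Emin B (h x) (h y))
    {m n em en gm gn : ℕ}
    (hem : Wce em = {x | A.r x m = false})
    (hen : Wce en = {x | A.r x n = false})
    (hmn : A.r m n = true)
    (hgm : IsMinOf B (Wce (h em)) gm)
    (hgn : IsMinOf B (Wce (h en)) gn)
    (hbad : B.r gn gm = true) : False := by
  haveI := A.wo
  have htrans : ∀ x, A.r x n = false → A.r x m = false := by
    intro x hx
    cases hxm : A.r x m with
    | false => rfl
    | true => exact absurd (trans_of (fun a b => A.r a b = true) hxm hmn) (by simp [hx])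
  set F : Code → ℕ →. ℕ := fun c x =>
    bif A.r x n then
      (bif A.r x m then Part.none
        else ((Denumerable.ofNat Code (h (Encodable.encode c))).eval gn).map fun _ => 0)
    else Part.some 0 with hF
  have hFp : Partrec₂ F := by
    apply Partrec.cond (A.comp.comp Computable.snd (Computable.const n))
    · apply Partrec.cond (A.comp.comp Computable.snd (Computable.const m)) Partrec.none
      exact Partrec.map
        (eval_part.comp
          ((Computable.ofNat Code).comp (hcomp.comp (Computable.encode.comp Computable.fst)))
          (Computable.const gn))
        (Computable.const 0).to₂
    · exact Partrec.const' (Part.some 0)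
  obtain ⟨c, hc⟩ := fixed_point₂ hFp
  have hW : Wce (Encodable.encode c) = {x | (F c x).Dom} := by
    rw [wce_encode, hc]
  by_cases hmem : gn ∈ Wce (h (Encodable.encode c))
  · -- W_c = [m, ∞), so image has min gm, contradicting gn ∈ image with gn < gm
    have hWc : Wce (Encodable.encode c) = {x | A.r x m = false} := by
      rw [hW]
      ext x
      simp only [Set.mem_setOf_eq, hF]
      cases hx : A.r x n with
      | false => simp [htrans x hx]
      | true =>
        cases hxm : A.r x m with
        | false =>
          simpa [hxm, Wce] using hmem
        | true => simp [hxm]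
    have hA : Emin A (Encodable.encode c) em :=
      Or.inr ⟨m, by rw [hWc]; exact seg_min A m, by rw [hem]; exact seg_min A m⟩
    rcases (hred _ _).mp hA with ⟨hh, -⟩ | ⟨k, hk1, hk2⟩
    · rw [hh] at hmem; exact hmem
    · have : k = gm := min_unique B hk2 hgm
      subst this
      have := hk1.2 gn hmem
      rw [this] at hbad; cases hbad
  · -- W_c = [n, ∞), so image has min gn, contradicting gn ∉ image
    have hWc : Wce (Encodable.encode c) = {x | A.r x n = false} := by
      rw [hW]
      ext x
      simp only [Set.mem_setOf_eq, hF]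
      cases hx : A.r x n with
      | false => simp [hx]
      | true =>
        cases hxm : A.r x m with
        | false =>
          simp only [hx, hxm, cond_true, cond_false, Part.map_Dom]
          constructor
          · intro hd; exact absurd hd hmem
          · intro hh; cases hh
        | true => simp [hx, hxm]
    have hA : Emin A (Encodable.encode c) en :=
      Or.inr ⟨n, by rw [hWc]; exact seg_min A n, by rw [hen]; exact seg_min A n⟩
    rcases (hred _ _).mp hA with ⟨-, hh⟩ | ⟨k, hk1, hk2⟩
    · rw [hh] at hgn; exact hgn.1
    · have : k = gn := min_unique B hk2 hgn
      subst this
      exact hmem hk1.1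

end Steps


/-- If the order type of the computable well-ordering B is strictly smaller than that
of A, then E_min(A) is not computably reducible to E_min(B). -/
theorem stmt4 (A B : CompWO) (h : B.otype < A.otype) :
    ¬ CompReducible (Emin A) (Emin B) := by
  haveI := A.wo; haveI := B.wo
  rintro ⟨f, fcomp, fred⟩
  choose segc hsegc using fun n => exists_seg_code A n
  set e : ℕ → ℕ := fun n => Encodable.encode (segc n) with he
  have hWe : ∀ n, Wce (e n) = {x | A.r x n = false} := by
    intro n
    rw [he, wce_encode]
    ext x
    exact hsegc n x
  have hemin : ∀ n, IsMinOf A (Wce (e n)) n := fun n => by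
    rw [hWe n]; exact seg_min A n
  have hne : ∀ n, (Wce (f (e n))).Nonempty := fun n => stepA fcomp fred n (e n) (hWe n)
  choose g hg using fun n => exists_bmin B (hne n)
  -- the reduction separates distinct n
  have hsep : ∀ m n : ℕ, g m = g n → m = n := by
    intro m n heq
    have hB : Emin B (f (e m)) (f (e n)) := Or.inr ⟨g m, hg m, heq ▸ hg n⟩
    rcases (fred _ _).mpr hB with ⟨h1, -⟩ | ⟨k, hk1, hk2⟩
    · exact absurd (h1 ▸ (hemin m).1) (Set.notMem_empty m)
    · exact (min_unique A hk1 (hemin m)).symm.trans (min_unique A hk2 (hemin n))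
  have hmono : ∀ m n, A.r m n = true → B.r (g m) (g n) = true := by
    intro m n hmn
    have hgne : g m ≠ g n := by
      intro heq
      have := hsep m n heq
      subst this
      rw [rr_self A m] at hmn; cases hmn
    rcases trichotomous_of (fun a b => B.r a b = true) (g m) (g n) with hh|hh|hh
    · exact hh
    · exact absurd hh hgne
    · exact absurd (stepB fcomp fred (hWe m) (hWe n) hmn (hg m) (hg n) hh) id
  have emb : (fun a b => A.r a b = true) ↪r (fun a b => B.r a b = true) :=
    { toFun := g
      inj' := fun a b hab => hsep a b hab
      map_rel_iff' := by
        intro a b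
        constructor
        · intro hh
          replace hh : B.r (g a) (g b) = true := hh
          rcases trichotomous_of (fun a b => A.r a b = true) a b with h1|h1|h1
          · exact h1
          · subst h1; rw [rr_self B (g a)] at hh; cases hh
          · have h2 := hmono b a h1
            have := trans_of (fun a b => B.r a b = true) hh h2
            rw [rr_self B (g a)] at this; cases this
        · exact hmono a b }
  have hle : A.otype ≤ B.otype := Ordinal.type_le_iff'.mpr ⟨emb⟩
  exact absurd hle (not_le.mpr h)
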